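/- arXiv:1004.0072 — 3 statements merged into one kernel-verified Lean document; each statement's English description precedes it below -/
import Mathlib

section
/- Let W be a multiplicative unitary on H⊗H, i.e. W₁₂W₁₃W₂₃ = W₂₃W₁₂. Then the map Δ(a) := W*(1⊗a)W is coassociative on the algebra generated by slices {(id⊗ω)(W) : ω ∈ B(H)_*}. -/
/-- let `W` be a multiplicative unitary, i.e. a unitary in
`A2 = B(H⊗H)` satisfying the pentagon equation `W₁₂W₁₃W₂₃ = W₂₃W₁₂` in
`A3 = B(H⊗H⊗H)`.  Then the map `Δ(a) := W*(1⊗a)W` is coassociative: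
`(Δ⊗id)(Δ a) = (id⊗Δ)(Δ a)`, where `(Δ⊗id)(y) = W₁₂* y₂₃ W₁₂` and
`(id⊗Δ)(y) = W₂₃* y₁₃ W₂₃`.  Here `A1 = B(H)` and the leg embeddings are
abstracted as unital *-homomorphisms `ι2 : A1 → A2` (second leg) and
`leg12, leg13, leg23 : A2 → A3` satisfying the obvious compatibilities. -/
theorem multiplicative_unitary_comultiplication_coassoc
    {A1 A2 A3 : Type*}
    [Ring A1] [StarRing A1] [Algebra ℂ A1] [StarModule ℂ A1]
    [Ring A2] [StarRing A2] [Algebra ℂ A2] [StarModule ℂ A2]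
    [Ring A3] [StarRing A3] [Algebra ℂ A3] [StarModule ℂ A3]
    (ι2 : A1 →⋆ₐ[ℂ] A2)
    (leg12 leg13 leg23 : A2 →⋆ₐ[ℂ] A3)
    -- both `leg23 ∘ ι2` and `leg13 ∘ ι2` put an operator in the third leg
    (hleg : ∀ a : A1, leg23 (ι2 a) = leg13 (ι2 a))
    -- operators in legs (1,2) commute with operators in leg 3
    (hcomm : ∀ (x : A2) (a : A1), Commute (leg12 x) (leg23 (ι2 a)))
    (W : A2) (hW₁ : star W * W = 1) (hW₂ : W * star W = 1)
    (hpentagon : leg12 W * leg13 W * leg23 W = leg23 W * leg12 W) :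
    ∀ a : A1,
      star (leg12 W) * leg23 (star W * ι2 a * W) * leg12 W
        = star (leg23 W) * leg13 (star W * ι2 a * W) * leg23 W := by
  intro a
  set x := leg23 (ι2 a) with hxdef
  have hx : leg23 (ι2 a) = leg13 (ι2 a) := hleg a
  have hcs : leg12 (star W) * x = x * leg12 (star W) := hcomm (star W) a
  have h1 : leg12 (star W) * leg12 W = 1 := by rw [← map_mul, hW₁, map_one]
  have hcancel : leg12 (star W) * x * leg12 W = x := by
    rw [hcs, mul_assoc, h1, mul_one]
  calc star (leg12 W) * leg23 (star W * ι2 a * W) * leg12 W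
      = leg12 (star W) * (leg23 (star W) * x * leg23 W) * leg12 W := by
        simp [map_mul, map_star, hxdef]
    _ = star (leg23 W * leg12 W) * x * (leg23 W * leg12 W) := by
        simp [map_star, star_mul, mul_assoc]
    _ = star (leg12 W * leg13 W * leg23 W) * x * (leg12 W * leg13 W * leg23 W) := by
        rw [hpentagon]
    _ = leg23 (star W) * leg13 (star W) * ((leg12 (star W) * x * leg12 W)
          * leg13 W * leg23 W) := by
        simp [star_mul, map_star, mul_assoc]
    _ = star (leg23 W) * leg13 (star W * ι2 a * W) * leg23 W := by
        rw [hcancel]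
        simp [map_mul, map_star, mul_assoc, ← hx, hxdef]
end

section
/- If x_{ij} is the quantum Serre element in a matrix algebra A as above, central in A, and it satisfies both k_i x_{ij} k_i⁻¹ = q_i^{2−a_{ij}} x_{ij} and k_j x_{ij} k_j⁻¹ = q_j^{a_{ji}(1−a_{ij})+2} x_{ij}, where q_i = q^{d_i} with q > 0, q ≠ 1, and d_i ≥ 1 integers, then x_{ij} = 0. (Key point: if a_{ij} ≠ −2 then q_i^{2−a_{ij}} ≠ 1; if a_{ij} = −2 then q_j^{a_{ji}(1−a_{ij})+2} ≠ 1, using that entries a_{ij}, a_{ji} of a Cartan matrix with a_{ij} = −2 force a_{ji} = −1.) -/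
/-- let `(a_{ij})` be (entries of) a Cartan matrix of finite type
(`a_{ij}, a_{ji} ≤ 0`, `a_{ij}a_{ji} ≤ 3` for `i ≠ j`), `d_i, d_j ≥ 1` with
`d_i a_{ij} = d_j a_{ji}`, `q > 0` real with `q ≠ 1`, `q_i = q^{d_i}`.
If the quantum Serre element `x = x_{ij}` is central in `A` and satisfies both
`k_i x k_i⁻¹ = q_i^{2−a_{ij}} x` and `k_j x k_j⁻¹ = q_j^{a_{ji}(1−a_{ij})+2} x`,
then `x = 0`. -/
theorem serre_element_vanishes
    {A : Type*} [Ring A] [Algebra ℂ A]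
    (aij aji : ℤ) (haij : aij ≤ 0) (haji : aji ≤ 0) (hfin : aij * aji ≤ 3)
    (di dj : ℕ) (hdi : 1 ≤ di) (hdj : 1 ≤ dj)
    (hsym : (di : ℤ) * aij = (dj : ℤ) * aji)
    (q : ℝ) (hq0 : 0 < q) (hq1 : q ≠ 1)
    (ki kiinv kj kjinv : A)
    (hki : ki * kiinv = 1) (hki' : kiinv * ki = 1)
    (hkj : kj * kjinv = 1) (hkj' : kjinv * kj = 1)
    (x : A) (hx_central : ∀ a : A, x * a = a * x)
    (hconj_i : ki * x * kiinv = (((q : ℂ) ^ di) ^ (2 - aij)) • x)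
    (hconj_j : kj * x * kjinv = (((q : ℂ) ^ dj) ^ (aji * (1 - aij) + 2)) • x) :
    x = 0 := by
  set c : ℂ := ((q : ℂ) ^ di) ^ (2 - aij) with hc
  -- the conjugation is trivial since x is central
  have hx : x = c • x := by
    rw [← hconj_i, mul_assoc, hx_central kiinv, ← mul_assoc, hki, one_mul]
  -- c ≠ 1
  have key : ∀ (r : ℝ), 0 < r → r ≠ 1 → ∀ n : ℕ, n ≠ 0 → r ^ n ≠ 1 := by
    intro r hr0 hr1 n hn h
    rcases lt_or_gt_of_ne hr1 with hlt | hgt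
    · have := pow_lt_one₀ hr0.le hlt hn
      linarith
    · have := one_lt_pow₀ hgt hn
      linarith
  have hr : (q : ℝ) ^ di ≠ 1 := key q hq0 hq1 di (by omega)
  have hc1 : c ≠ 1 := by
    have hrpos : (0 : ℝ) < q ^ di := pow_pos hq0 di
    have : c = ((((q : ℝ) ^ di) ^ (2 - aij) : ℝ) : ℂ) := by push_cast; ring
    rw [this]
    intro h
    have h' : ((q : ℝ) ^ di) ^ (2 - aij) = 1 := by exact_mod_cast h
    rw [show (2 : ℤ) - aij = ((2 - aij).toNat : ℤ) by omega, zpow_natCast] at h'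
    exact key _ hrpos hr _ (by omega) h'
  have h0 : (c - 1) • x = 0 := by
    rw [sub_smul, one_smul, ← hx, sub_self]
  have := congrArg (fun y => (c - 1)⁻¹ • y) h0
  simpa [smul_smul, inv_mul_cancel₀ (sub_ne_zero.mpr hc1)] using this
end

section
/- Every Hochschild 1-cocycle on a finite-dimensional semisimple ℂ-algebra A with values in a finite-dimensional A-bimodule M is a coboundary: if D : A → M satisfies D(ab) = D(a)·b + a·D(b), then there exists m ∈ M with D(a) = ma − am for all a ∈ A. -/
open LinearMap Module MulOpposite Finset

namespace HochschildAux

variable {A : Type*} [Ring A] [Algebra ℂ A] [FiniteDimensional ℂ A]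

lemma Lm_mul (a b : A) :
    LinearMap.mul ℂ A (a * b) = LinearMap.mul ℂ A a * LinearMap.mul ℂ A b := by
  ext c
  simp [LinearMap.mul_apply', Module.End.mul_apply, mul_assoc]

variable (A) in
/-- The trace form `τ a b = tr (L_{ab})`. -/
noncomputable def tf : LinearMap.BilinForm ℂ A :=
  (LinearMap.mul ℂ A).compr₂ ((LinearMap.trace ℂ A) ∘ₗ (LinearMap.mul ℂ A))

lemma tf_apply (a b : A) :
    tf A a b = LinearMap.trace ℂ A (LinearMap.mul ℂ A (a * b)) := rfl

lemma tf_symm (a b : A) : tf A a b = tf A b a := by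
  rw [tf_apply, tf_apply, Lm_mul, Lm_mul, LinearMap.trace_mul_comm]

lemma tf_assoc (a b c : A) : tf A (a * b) c = tf A a (b * c) := by
  rw [tf_apply, tf_apply, mul_assoc]

lemma tf_shift (a b c : A) : tf A (a * b) c = tf A b (c * a) := by
  rw [tf_apply, tf_apply, mul_assoc, Lm_mul, LinearMap.trace_mul_comm, ← Lm_mul,
    mul_assoc]

lemma tf_nondeg [IsSemisimpleRing A] : (tf A).Nondegenerate := by
  classical
  let I : Submodule A A :=
    { carrier := {x | ∀ b, tf A x b = 0}
      add_mem' := fun {x y} hx hy b => by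
        rw [map_add, LinearMap.add_apply, hx b, hy b, add_zero]
      zero_mem' := fun b => by rw [map_zero, LinearMap.zero_apply]
      smul_mem' := fun a x hx b => by
        have : tf A (a * x) b = tf A x (b * a) := tf_shift a x b
        simpa [smul_eq_mul, this] using hx (b * a) }
  suffices hI : ∀ x ∈ I, x = 0 by
    refine ⟨fun z hz => hI z hz, fun z hz => hI z fun b => ?_⟩
    rw [tf_symm]; exact hz b
  obtain ⟨J, hJ⟩ := exists_isCompl I
  set π := I.linearProjOfIsCompl J hJ with hπ
  set e : A := ((π 1 : I) : A) with he_def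
  have he_mem : e ∈ I := (π 1).2
  have he : ∀ x ∈ I, x = x * e := by
    intro x hx
    have h2 : π x = ⟨x, hx⟩ := I.linearProjOfIsCompl_apply_left hJ ⟨x, hx⟩
    have h1 : π x = x • π 1 := by
      conv_lhs => rw [show x = x • (1 : A) by simp [smul_eq_mul]]
      rw [map_smul]
    have h3 := h2.symm.trans h1
    have h4 := congrArg (Subtype.val) h3
    simpa [smul_eq_mul] using h4
  have hee : e * e = e := (he e he_mem).symm
  set f : A →ₗ[ℂ] A := LinearMap.mul ℂ A e with hf
  have hff : ∀ z, f (f z) = f z := by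
    intro z
    simp only [hf, LinearMap.mul_apply']
    rw [← mul_assoc, hee]
  have hproj : LinearMap.IsProj (LinearMap.range f) f := by
    constructor
    · intro z; exact LinearMap.mem_range_self f z
    · rintro z ⟨w, rfl⟩; exact hff w
  have htr : LinearMap.trace ℂ A f = (finrank ℂ (LinearMap.range f) : ℂ) :=
    hproj.trace
  have h0 : tf A e e = 0 := he_mem e
  have hcast : (finrank ℂ (LinearMap.range f) : ℂ) = 0 := by
    rw [← htr, ← h0, tf_apply, hee]
  have hrank : finrank ℂ (LinearMap.range f) = 0 := by exact_mod_cast hcast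
  have hbot : LinearMap.range f = ⊥ := Submodule.finrank_eq_zero.mp hrank
  have he0 : e = 0 := by
    have h1 : f 1 ∈ LinearMap.range f := LinearMap.mem_range_self f 1
    rw [hbot] at h1
    simpa [hf, LinearMap.mul_apply'] using h1
  intro x hx
  rw [he x hx, he0, mul_zero]

/-- Separability data: dual bases with compatible expansion coefficients and a
central inverse of the Casimir element. -/
lemma exists_sep [IsSemisimpleRing A] :
    ∃ (n : ℕ) (x y : Fin n → A) (u : A),
      (∀ b : A, u * b = b * u) ∧
      (u * ∑ i, x i * y i = 1) ∧
      (∀ a : A, ∃ c : Fin n → Fin n → ℂ,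
        (∀ i, a * x i = ∑ j, c i j • x j) ∧ (∀ j, y j * a = ∑ i, c i j • y i)) := by
  classical
  have hB : (tf A).Nondegenerate := tf_nondeg
  have hsymm : (tf A).IsSymm := LinearMap.BilinForm.isSymm_def.mpr fun a b => tf_symm a b
  let x : Basis (Fin (finrank ℂ A)) ℂ A := finBasis ℂ A
  let y : Basis (Fin (finrank ℂ A)) ℂ A := (tf A).dualBasis hB x
  have hxy : (tf A).dualBasis hB y = x := (tf A).dualBasis_dualBasis hB hsymm x
  have hrepr1 : ∀ (z : A) j, x.repr z j = tf A z (y j) := by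
    intro z j
    rw [← hxy, (tf A).dualBasis_repr_apply]
  have hrepr2 : ∀ (z : A) i, y.repr z i = tf A z (x i) := by
    intro z i
    rw [(tf A).dualBasis_repr_apply]
  have E1 : ∀ z : A, z = ∑ j, tf A z (y j) • x j := by
    intro z
    conv_lhs => rw [← x.sum_repr z]
    exact Finset.sum_congr rfl fun j _ => by rw [hrepr1]
  have E2 : ∀ z : A, z = ∑ i, tf A z (x i) • y i := by
    intro z
    conv_lhs => rw [← y.sum_repr z]
    exact Finset.sum_congr rfl fun i _ => by rw [hrepr2]
  set cas : A := ∑ i, x i * y i with hcas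
  have key : ∀ z : A, tf A cas z = LinearMap.trace ℂ A (LinearMap.mul ℂ A z) := by
    intro z
    have h1 : LinearMap.trace ℂ A (LinearMap.mul ℂ A z)
        = ∑ i, x.repr (z * x i) i := by
      rw [LinearMap.trace_eq_matrix_trace ℂ x, Matrix.trace]
      refine Finset.sum_congr rfl fun i _ => ?_
      rw [Matrix.diag_apply, LinearMap.toMatrix_apply, LinearMap.mul_apply']
    rw [h1]
    have h2 : ∀ i, x.repr (z * x i) i = tf A z (x i * y i) := by
      intro i
      rw [hrepr1, tf_assoc]
    rw [Finset.sum_congr rfl fun i _ => h2 i, ← map_sum, ← hcas, tf_symm]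
  have hinj : ∀ v : A, cas * v = 0 → v = 0 := by
    intro v hv
    apply hB.1
    intro b
    have h1 : tf A v b = tf A cas (v * b) := by
      rw [key, tf_apply]
    rw [h1, ← tf_assoc, hv, map_zero, LinearMap.zero_apply]
  have hinj' : Function.Injective (LinearMap.mul ℂ A cas) := by
    rw [← LinearMap.ker_eq_bot, Submodule.eq_bot_iff]
    intro v hv
    apply hinj
    simpa [LinearMap.mul_apply'] using hv
  have hsurj : Function.Surjective (LinearMap.mul ℂ A cas) :=
    LinearMap.injective_iff_surjective.mp hinj'
  obtain ⟨u, hu⟩ := hsurj 1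
  have hu1 : cas * u = 1 := by
    simpa [LinearMap.mul_apply'] using hu
  have hcen : ∀ a : A, cas * a = a * cas := by
    intro a
    have h : ∀ b, tf A (cas * a - a * cas) b = 0 := by
      intro b
      have e1 : tf A (cas * a) b = LinearMap.trace ℂ A (LinearMap.mul ℂ A (a * b)) := by
        rw [tf_assoc, key]
      have e2 : tf A (a * cas) b = LinearMap.trace ℂ A (LinearMap.mul ℂ A (a * b)) := by
        rw [tf_shift, key, Lm_mul, Lm_mul, LinearMap.trace_mul_comm]
      rw [map_sub, LinearMap.sub_apply, e1, e2, sub_self]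
    have h5 := hB.1 _ h
    rwa [sub_eq_zero] at h5
  have hu2 : u * cas = 1 := by
    apply hinj'
    show cas * (u * cas) = cas * 1
    rw [← mul_assoc, hu1, one_mul, mul_one]
  have hucen : ∀ b : A, u * b = b * u := by
    intro b
    calc u * b = u * b * (cas * u) := by rw [hu1, mul_one]
      _ = u * (b * cas) * u := by rw [← mul_assoc, ← mul_assoc]
      _ = u * (cas * b) * u := by rw [hcen]
      _ = (u * cas) * (b * u) := by rw [← mul_assoc, mul_assoc (u * cas)]
      _ = b * u := by rw [hu2, one_mul]
  refine ⟨finrank ℂ A, x, y, u, hucen, by rw [← hcas, hu2], ?_⟩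
  intro a
  refine ⟨fun i j => tf A (a * x i) (y j), fun i => E1 (a * x i), fun j => ?_⟩
  calc y j * a = ∑ i, tf A (y j * a) (x i) • y i := E2 (y j * a)
    _ = ∑ i, tf A (a * x i) (y j) • y i := by
        refine Finset.sum_congr rfl fun i _ => ?_
        rw [tf_assoc, tf_symm]

end HochschildAux

/-- every Hochschild 1-cocycle on a finite-dimensional semisimple
ℂ-algebra `A` with values in a finite-dimensional `A`-bimodule `M` is a
coboundary: if `D : A → M` is ℂ-linear with `D(ab) = a·D(b) + D(a)·b`, then
there is `m ∈ M` with `D(a) = m·a − a·m` — written with the right action of `A`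
implemented by the left action of `Aᵐᵒᵖ`.  Equivalently `HH¹(A, M) = 0`. -/
theorem hochschild_one_cocycle_is_coboundary
    {A : Type*} [Ring A] [Algebra ℂ A] [FiniteDimensional ℂ A] [IsSemisimpleRing A]
    {M : Type*} [AddCommGroup M] [Module ℂ M] [FiniteDimensional ℂ M]
    [Module A M] [Module Aᵐᵒᵖ M] [SMulCommClass A Aᵐᵒᵖ M]
    (D : A →ₗ[ℂ] M)
    (hD : ∀ a b : A, D (a * b) = a • D b + (MulOpposite.op b) • D a) :
    ∃ m : M, ∀ a : A, D a = (MulOpposite.op a) • m - a • m := by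
  classical
  have hD1 : D 1 = 0 := by
    have h := hD 1 1
    rw [mul_one, MulOpposite.op_one, one_smul, one_smul] at h
    have h' := h.symm
    rwa [add_eq_left] at h'
  have hDalg : ∀ r : ℂ, D (algebraMap ℂ A r) = 0 := by
    intro r
    rw [Algebra.algebraMap_eq_smul_one, map_smul, hD1, smul_zero]
  have hscal : ∀ (r : ℂ) (x w : A), ((r • x : A)) • D w = x • D (r • w) := by
    intro r x w
    have h1 : (r • x : A) = x * algebraMap ℂ A r := by
      rw [Algebra.smul_def, Algebra.commutes]
    have h2 : algebraMap ℂ A r • D w = D (r • w) := by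
      have h := hD (algebraMap ℂ A r) w
      rw [hDalg, smul_zero, add_zero, ← Algebra.smul_def] at h
      exact h.symm
    rw [h1, mul_smul, h2]
  obtain ⟨n, x, y, u, hucen, huc, hcoef⟩ := HochschildAux.exists_sep (A := A)
  set m : M := ∑ i, x i • D (y i) with hm
  set cas : A := ∑ i, x i * y i with hcas
  have key : ∀ a : A, a • m = cas • D a + MulOpposite.op a • m := by
    intro a
    obtain ⟨c, hc1, hc2⟩ := hcoef a
    calc a • m = ∑ i, (a * x i) • D (y i) := by
          rw [hm, Finset.smul_sum]
          exact Finset.sum_congr rfl fun i _ => (mul_smul a (x i) (D (y i))).symm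
      _ = ∑ i, ∑ j, (c i j • x j) • D (y i) := by
          refine Finset.sum_congr rfl fun i _ => ?_
          rw [hc1 i, Finset.sum_smul]
      _ = ∑ j, ∑ i, x j • D (c i j • y i) := by
          rw [Finset.sum_comm]
          exact Finset.sum_congr rfl fun j _ => Finset.sum_congr rfl fun i _ =>
            hscal (c i j) (x j) (y i)
      _ = ∑ j, x j • D (y j * a) := by
          refine Finset.sum_congr rfl fun j _ => ?_
          rw [← Finset.smul_sum, ← map_sum, ← hc2 j]
      _ = ∑ j, ((x j * y j) • D a + MulOpposite.op a • (x j • D (y j))) := by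
          refine Finset.sum_congr rfl fun j _ => ?_
          rw [hD (y j) a, smul_add, mul_smul, smul_comm (x j) (MulOpposite.op a) (D (y j))]
      _ = cas • D a + MulOpposite.op a • m := by
          rw [Finset.sum_add_distrib, hcas, Finset.sum_smul, hm, Finset.smul_sum]
  refine ⟨-(u • m), ?_⟩
  intro a
  have h := congrArg (fun v => u • v) (key a)
  simp only [smul_add] at h
  have h1 : u • a • m = a • (u • m) := by
    rw [← mul_smul, hucen a, mul_smul]
  have h2 : u • cas • D a = D a := by
    rw [← mul_smul, huc, one_smul]
  have h3 : u • MulOpposite.op a • m = MulOpposite.op a • (u • m) := by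
    rw [smul_comm]
  rw [h1, h2, h3] at h
  have h4 : D a = a • (u • m) - MulOpposite.op a • (u • m) :=
    eq_sub_of_add_eq h.symm
  rw [h4, smul_neg, smul_neg]
  abel
end
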